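/- Let 𝔽_q be a finite field and let f_1, …, f_m : 𝔽_q × 𝔽_q → ℂ be 1-bounded. Set F(x) := 𝔼_{y∈𝔽_q} ∏_{i=1}^m f_i(x, y), and for h ∈ 𝔽_q set F_h(x) := 𝔼_{y∈𝔽_q} ∏_{i=1}^m Δ^{(1)}_h f_i(x, y). Then for every integer s ≥ 3, ‖F‖_{U^s}^{2^{s+1}} ≤ 𝔼_{h∈𝔽_q} ‖F_h‖_{U^{s−1}}^{2^{s−1}}. -/

import Mathlib

/-- The multiplicative difference `Δ_h f(x) = f(x+h)·conj(f(x))`. -/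
noncomputable def mDiff {F : Type*} [Add F] (h : F) (f : F → ℂ) : F → ℂ :=
  fun x => f (x + h) * (starRingEnd ℂ) (f x)

/-- Iterated multiplicative difference `Δ_{h₁,…,h_s} f`. -/
noncomputable def mDiffIter {F : Type*} [Add F] : (s : ℕ) → (Fin s → F) → (F → ℂ) → (F → ℂ)
  | 0, _, f => f
  | s + 1, h, f => mDiffIter s (fun i => h i.succ) (mDiff (h 0) f)

/-- The Gowers `U^s`-norm: `‖f‖_{U^s}^{2^s} = 𝔼_{x,h₁,…,h_s} Δ_{h₁,…,h_s} f(x)`. -/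
noncomputable def gowersNorm {F : Type*} [AddCommGroup F] [Fintype F] (s : ℕ) (f : F → ℂ) : ℝ :=
  (‖(∑ h : Fin s → F, ∑ x : F, mDiffIter s h f x)
      / (Fintype.card F : ℂ) ^ (s + 1)‖) ^ (((2 : ℝ) ^ s)⁻¹)

/-- The multiplicative difference in the first variable,
`Δ⁽¹⁾_h f(x,y) = f(x+h,y)·conj(f(x,y))`. -/
noncomputable def mDiff1 {F : Type*} [Add F] (h : F) (f : F → F → ℂ) : F → F → ℂ :=
  fun x y => f (x + h) y * (starRingEnd ℂ) (f x y)

open Finset Complex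

lemma mDiff_comm {F : Type*} [AddCommMonoid F] (a b : F) (f : F → ℂ) :
    mDiff a (mDiff b f) = mDiff b (mDiff a f) := by
  funext x
  simp only [mDiff, map_mul, Complex.conj_conj]
  rw [add_right_comm]
  ring

lemma mDiffIter_mDiff {F : Type*} [AddCommMonoid F] (n : ℕ) (k : Fin n → F) (a : F) (f : F → ℂ) :
    mDiffIter n k (mDiff a f) = mDiff a (mDiffIter n k f) := by
  induction n generalizing f with
  | zero => rfl
  | succ n ih =>
    show mDiffIter n _ (mDiff (k 0) (mDiff a f)) = _
    rw [mDiff_comm, ih]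
    rfl

lemma sum_mDiff {F : Type*} [AddCommGroup F] [Fintype F] (g : F → ℂ) :
    ∑ a : F, ∑ x : F, mDiff a g x = (Complex.normSq (∑ x : F, g x) : ℂ) := by
  rw [Finset.sum_comm, ← Complex.mul_conj]
  simp only [mDiff]
  have : ∀ x : F, ∑ a : F, g (x + a) * (starRingEnd ℂ) (g x)
      = (∑ z : F, g z) * (starRingEnd ℂ) (g x) := by
    intro x
    rw [← Finset.sum_mul]
    congr 1
    exact Fintype.sum_equiv (Equiv.addLeft x) _ _ (fun a => rfl)
  simp only [this]
  rw [← Finset.mul_sum, map_sum]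

lemma T_succ_aux {F : Type*} [AddCommGroup F] [Fintype F] (n : ℕ) (φ : (Fin (n+1) → F) → ℂ) :
    ∑ h : Fin (n+1) → F, φ h = ∑ a : F, ∑ k : Fin n → F, φ (Fin.cons a k) := by
  rw [← (Fin.consEquiv (fun _ => F)).sum_comp φ, Fintype.sum_prod_type]
  rfl

lemma mDiffIter_cons {F : Type*} [AddCommGroup F] (n : ℕ) (a : F) (k : Fin n → F) (f : F → ℂ) :
    mDiffIter (n+1) (Fin.cons a k) f = mDiffIter n k (mDiff a f) := by
  simp only [mDiffIter, Fin.cons_succ, Fin.cons_zero]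

lemma T_succ {F : Type*} [AddCommGroup F] [Fintype F] (n : ℕ) (f : F → ℂ) :
    ∑ h : Fin (n+1) → F, ∑ x : F, mDiffIter (n+1) h f x
      = ((∑ k : Fin n → F, Complex.normSq (∑ x : F, mDiffIter n k f x) : ℝ) : ℂ) := by
  rw [T_succ_aux]
  simp only [mDiffIter_cons, mDiffIter_mDiff]
  rw [Finset.sum_comm]
  push_cast
  exact Finset.sum_congr rfl fun k _ => sum_mDiff _

lemma mDiffIter_mul_const {F : Type*} [AddCommMonoid F] (n : ℕ) (k : Fin n → F) (g : F → ℂ)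
    (c : ℂ) (hc : (starRingEnd ℂ) c = c) :
    mDiffIter n k (fun x => g x * c) = fun x => mDiffIter n k g x * c ^ (2^n) := by
  induction n generalizing g c with
  | zero => simpa [mDiffIter] using rfl
  | succ n ih =>
    show mDiffIter n _ (mDiff (k 0) fun x => g x * c) = _
    have h1 : mDiff (k 0) (fun x => g x * c) = fun x => mDiff (k 0) g x * c^2 := by
      funext x; simp only [mDiff, map_mul, hc]; ring
    rw [h1, ih _ _ _ (by rw [map_pow, hc])]
    funext x
    show mDiffIter n _ (mDiff (k 0) g) x * (c ^ 2) ^ 2 ^ n = _ * c ^ 2 ^ (n+1)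
    rw [← pow_mul, pow_succ, mul_comm (2^n) 2]
    rfl

lemma mDiffIter_bound {F : Type*} [AddCommMonoid F] (n : ℕ) (k : Fin n → F) (f : F → ℂ)
    (hf : ∀ x, ‖f x‖ ≤ 1) : ∀ x, ‖mDiffIter n k f x‖ ≤ 1 := by
  induction n generalizing f with
  | zero => exact hf
  | succ n ih =>
    apply ih
    intro x
    simp only [mDiff, norm_mul, Complex.norm_conj]
    exact mul_le_one₀ (hf _) (norm_nonneg _) (hf x)

lemma normSq_sum_le {Y : Type} [Fintype Y] (a : Y → ℂ) :
    Complex.normSq (∑ y : Y, a y) ≤ (Fintype.card Y : ℝ) * ∑ y : Y, Complex.normSq (a y) := by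
  simp only [← Complex.sq_norm]
  calc ‖∑ y : Y, a y‖ ^ 2 ≤ (∑ y : Y, ‖a y‖) ^ 2 := by
        apply pow_le_pow_left₀ (norm_nonneg _)
        exact norm_sum_le _ _
    _ ≤ (∑ y : Y, ‖a y‖ ^ 2) * ∑ y : Y, (1:ℝ)^2 := by
        have := Finset.sum_mul_sq_le_sq_mul_sq Finset.univ (fun y => ‖a y‖) (fun _ => 1)
        simpa using this
    _ = (Fintype.card Y : ℝ) * ∑ y : Y, ‖a y‖ ^ 2 := by
        simp [mul_comm, Finset.card_univ]

lemma mDiff_sum {F : Type*} [Add F] {Y : Type} [Fintype Y] (a : F) (G : F → Y → ℂ) :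
    mDiff a (fun x => ∑ y : Y, G x y)
      = fun x => ∑ p : Y × Y, G (x + a) p.1 * (starRingEnd ℂ) (G x p.2) := by
  funext x
  simp only [mDiff, map_sum, Finset.sum_mul_sum, Fintype.sum_prod_type]

lemma key (F : Type*) [AddCommGroup F] [Fintype F] :
    ∀ (n : ℕ) (Y : Type) [Fintype Y] (G : F → Y → ℂ) (k : Fin n → F),
    Complex.normSq (∑ x : F, mDiffIter n k (fun x => ∑ y : Y, G x y) x)
      ≤ (Fintype.card Y : ℝ) ^ (2^n) *
        (∑ h : F, ∑ x : F, mDiffIter n k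
          (fun x => ∑ y : Y, G (x+h) y * (starRingEnd ℂ) (G x y)) x).re := by
  intro n
  induction n with
  | zero =>
    intro Y _ G k
    have e : (∑ h : F, ∑ x : F, mDiffIter 0 k
          (fun x => ∑ y : Y, G (x+h) y * (starRingEnd ℂ) (G x y)) x)
        = ∑ y : Y, (Complex.normSq (∑ x : F, G x y) : ℂ) := by
      show (∑ h : F, ∑ x : F, ∑ y : Y, G (x+h) y * (starRingEnd ℂ) (G x y)) = _
      have swap1 : (∑ h : F, ∑ x : F, ∑ y : Y, G (x+h) y * (starRingEnd ℂ) (G x y))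
          = ∑ y : Y, ∑ h : F, ∑ x : F, G (x+h) y * (starRingEnd ℂ) (G x y) := by
        conv_lhs =>
          rw [Finset.sum_congr rfl (fun h _ => Finset.sum_comm (s := Finset.univ)
            (t := Finset.univ) (f := fun x y => G (x+h) y * (starRingEnd ℂ) (G x y)))]
        rw [Finset.sum_comm]
      rw [swap1]
      exact Finset.sum_congr rfl fun y _ => sum_mDiff (fun x => G x y)
    show Complex.normSq (∑ x : F, ∑ y : Y, G x y) ≤ _
    rw [e, pow_zero, pow_one]
    have : (∑ y : Y, (Complex.normSq (∑ x : F, G x y) : ℂ)).re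
        = ∑ y : Y, Complex.normSq (∑ x : F, G x y) := by
      rw [← Complex.ofReal_sum, Complex.ofReal_re]
    rw [this, Finset.sum_comm]
    exact normSq_sum_le _
  | succ n ih =>
    intro Y _ G k
    set G' : F → Y × Y → ℂ := fun x p => G (x + k 0) p.1 * (starRingEnd ℂ) (G x p.2) with hG'
    have e1 : mDiffIter (n+1) k (fun x => ∑ y : Y, G x y)
        = mDiffIter n (fun i => k i.succ) (fun x => ∑ p : Y × Y, G' x p) := by
      show mDiffIter n _ (mDiff (k 0) _) = _
      rw [mDiff_sum]
    have e2 : ∀ h : F, mDiffIter (n+1) k (fun x => ∑ y : Y, G (x+h) y * (starRingEnd ℂ) (G x y))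
        = mDiffIter n (fun i => k i.succ)
            (fun x => ∑ p : Y × Y, G' (x+h) p * (starRingEnd ℂ) (G' x p)) := by
      intro h
      show mDiffIter n _ (mDiff (k 0) _) = _
      rw [mDiff_sum]
      refine congrArg (mDiffIter n fun i => k i.succ) ?_
      funext x
      refine Finset.sum_congr rfl fun p _ => ?_
      simp only [hG', map_mul, Complex.conj_conj]
      rw [show x + k 0 + h = x + h + k 0 by rw [add_right_comm]]
      ring
    have := ih (Y × Y) G' (fun i => k i.succ)
    rw [e1]
    simp only [e2]
    refine this.trans (le_of_eq ?_)
    congr 1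
    rw [Fintype.card_prod]
    push_cast
    rw [← sq, ← pow_mul, pow_succ' 2 n]

lemma gowersNorm_pow {F : Type*} [AddCommGroup F] [Fintype F] (s : ℕ) (f : F → ℂ) :
    gowersNorm s f ^ ((2:ℕ)^s) = ‖(∑ h : Fin s → F, ∑ x : F, mDiffIter s h f x)
      / (Fintype.card F : ℂ) ^ (s + 1)‖ := by
  rw [gowersNorm, ← Real.rpow_natCast _ (2^s), ← Real.rpow_mul (norm_nonneg _)]
  have : ((2:ℝ)^s)⁻¹ * ((2^s : ℕ) : ℝ) = 1 := by
    push_cast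
    field_simp
  rw [this, Real.rpow_one]

lemma gowersNorm_pow_sq {F : Type*} [AddCommGroup F] [Fintype F] (s : ℕ) (f : F → ℂ) :
    gowersNorm s f ^ ((2:ℕ)^(s+1)) = ‖(∑ h : Fin s → F, ∑ x : F, mDiffIter s h f x)
      / (Fintype.card F : ℂ) ^ (s + 1)‖ ^ 2 := by
  rw [gowersNorm, ← Real.rpow_natCast _ (2^(s+1)), ← Real.rpow_mul (norm_nonneg _)]
  have : ((2:ℝ)^s)⁻¹ * ((2^(s+1) : ℕ) : ℝ) = 2 := by
    push_cast
    rw [pow_succ]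
    field_simp
  rw [this, Real.rpow_two]

/-- single-step Cauchy–Schwarz.  For 1-bounded `f₁,…,fₘ : 𝔽_q×𝔽_q → ℂ`,
with `F(x) = 𝔼_y ∏ᵢ fᵢ(x,y)` and `F_h(x) = 𝔼_y ∏ᵢ Δ⁽¹⁾_h fᵢ(x,y)`, one has
`‖F‖_{U^s}^{2^{s+1}} ≤ 𝔼_h ‖F_h‖_{U^{s−1}}^{2^{s−1}}` for every `s ≥ 3`. -/
theorem statement12 (F : Type) [Field F] [Fintype F] (m : ℕ)
    (f : Fin m → F → F → ℂ) (hf : ∀ i x y, ‖f i x y‖ ≤ 1)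
    (s : ℕ) (hs : 3 ≤ s) :
    gowersNorm s (fun x => (∑ y : F, ∏ i : Fin m, f i x y) / (Fintype.card F : ℂ))
        ^ (2 ^ (s + 1) : ℕ)
      ≤ (∑ h : F,
            gowersNorm (s - 1) (fun x =>
              (∑ y : F, ∏ i : Fin m, mDiff1 h (f i) x y) / (Fintype.card F : ℂ))
              ^ (2 ^ (s - 1) : ℕ))
          / (Fintype.card F : ℝ) := by
  obtain ⟨n, rfl⟩ : ∃ n, s = n + 1 := ⟨s - 1, by omega⟩
  simp only [Nat.add_sub_cancel]
  have hq0 : 0 < Fintype.card F := Fintype.card_pos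
  set q : ℕ := Fintype.card F with hq
  have hqR : (0:ℝ) < (q:ℝ) := by exact_mod_cast hq0
  set G : F → F → ℂ := fun x y => ∏ i, f i x y with hG
  set S : F → ℂ := fun x => ∑ y, G x y with hS
  set Sh : F → F → ℂ := fun h x => ∑ y : F, G (x+h) y * (starRingEnd ℂ) (G x y) with hSh
  set c : ℂ := ((q:ℂ))⁻¹ with hc
  set ρ : ℝ := ((q:ℝ))⁻¹ with hρ
  have hcc : (starRingEnd ℂ) c = c := by simp [hc]
  have habsc : ‖c‖ = ρ := by simp [hc, hρ]
  have hGb : ∀ x y, ‖G x y‖ ≤ 1 := by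
    intro x y
    rw [hG]
    simp only
    rw [norm_prod]
    exact Finset.prod_le_one (fun i _ => norm_nonneg _) (fun i _ => hf i x y)
  have hSb : ∀ x, ‖S x * c‖ ≤ 1 := by
    intro x
    rw [norm_mul, habsc]
    have h1 : ‖S x‖ ≤ q := by
      refine (norm_sum_le _ _).trans ?_
      calc (∑ y : F, ‖G x y‖) ≤ ∑ y : F, 1 :=
            Finset.sum_le_sum fun y _ => hGb x y
        _ = q := by simp [hq]
      done
    calc ‖S x‖ * ρ ≤ (q:ℝ) * ρ :=
          mul_le_mul_of_nonneg_right h1 (by positivity)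
      _ = 1 := by rw [hρ]; field_simp
  -- rewrite the statement's functions
  have hFn : (fun x : F => (∑ y : F, ∏ i, f i x y) / (q:ℂ)) = fun x => S x * c := by
    funext x
    rw [div_eq_mul_inv]
  have hFh : ∀ h : F, (fun x : F => (∑ y : F, ∏ i, mDiff1 h (f i) x y) / (q:ℂ))
      = fun x => Sh h x * c := by
    intro h
    funext x
    rw [div_eq_mul_inv]
    congr 1
    refine Finset.sum_congr rfl fun y _ => ?_
    simp only [mDiff1, hG, Finset.prod_mul_distrib, map_prod]
  rw [hFn]
  simp only [hFh]
  rw [gowersNorm_pow_sq]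
  simp only [gowersNorm_pow]
  -- abbreviations
  set TS : ℂ := ∑ h : Fin (n+1) → F, ∑ x : F, mDiffIter (n+1) h (fun x => S x * c) x with hTSdef
  set Th : F → ℂ := fun h => ∑ k : Fin n → F, ∑ x : F, mDiffIter n k (Sh h) x with hTh
  have hscale : ∀ k : Fin n → F, (∑ x : F, mDiffIter n k (fun x => S x * c) x)
      = (∑ x : F, mDiffIter n k S x) * c^(2^n) := by
    intro k
    rw [mDiffIter_mul_const n k S c hcc, ← Finset.sum_mul]
  have hThc : ∀ h : F, (∑ k : Fin n → F, ∑ x : F, mDiffIter n k (fun x => Sh h x * c) x)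
      = Th h * c^(2^n) := by
    intro h
    rw [hTh]
    simp only
    rw [Finset.sum_mul]
    refine Finset.sum_congr rfl fun k _ => ?_
    rw [mDiffIter_mul_const n k (Sh h) c hcc, ← Finset.sum_mul]
  -- boundedness of the average
  have hTSle : ‖TS‖ ≤ (q:ℝ)^(n+1+1) := by
    rw [hTSdef]
    refine (norm_sum_le _ _).trans ?_
    have : ∀ h : Fin (n+1) → F, ‖∑ x : F, mDiffIter (n+1) h (fun x => S x * c) x‖
        ≤ (q:ℝ) := by
      intro h
      refine (norm_sum_le _ _).trans ?_
      calc (∑ x : F, ‖mDiffIter (n+1) h (fun x => S x * c) x‖) ≤ ∑ x : F, 1 :=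
            Finset.sum_le_sum fun x _ => mDiffIter_bound (n+1) h _ hSb x
        _ = q := by simp [hq]
    refine (Finset.sum_le_sum fun h _ => this h).trans ?_
    rw [Finset.sum_const, Finset.card_univ, Fintype.card_fun, Fintype.card_fin]
    simp only [nsmul_eq_mul]
    refine le_of_eq ?_
    push_cast
    ring
  have hkey : ∀ k : Fin n → F, Complex.normSq (∑ x : F, mDiffIter n k S x)
      ≤ (q:ℝ)^(2^n) * (∑ h : F, ∑ x : F, mDiffIter n k (Sh h) x).re := by
    intro k
    have h0 := key F n F G k
    rw [hq]
    simpa only [hS, hSh] using h0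
  have hTS : TS = ((∑ k : Fin n → F,
      Complex.normSq (∑ x : F, mDiffIter n k (fun x => S x * c) x) : ℝ) : ℂ) := T_succ n _
  have habsTS : ‖TS‖ = ∑ k : Fin n → F,
      Complex.normSq ((∑ x : F, mDiffIter n k S x) * c^(2^n)) := by
    rw [hTS, Complex.norm_real, Real.norm_eq_abs,
      _root_.abs_of_nonneg (Finset.sum_nonneg fun _ _ => Complex.normSq_nonneg _)]
    exact Finset.sum_congr rfl fun k _ => by rw [hscale k]
  have hnormc : Complex.normSq (c^(2^n)) = ρ^(2^(n+1)) := by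
    rw [map_pow Complex.normSq, hc,
      show ((q:ℂ))⁻¹ = (((q:ℝ)⁻¹ : ℝ) : ℂ) by push_cast; ring,
      Complex.normSq_ofReal, ← hρ, ← sq, ← pow_mul, pow_succ' 2 n]
  have hqρ : (q:ℝ)^(2^n) * ρ^(2^(n+1)) = ρ^(2^n) := by
    rw [pow_succ' 2 n, pow_mul, ← mul_pow]
    congr 1
    rw [hρ]
    field_simp
  have main1 : ‖TS‖ ≤ ρ^(2^n) * ∑ h : F, ‖Th h‖ := by
    rw [habsTS]
    have step1 : ∀ k : Fin n → F, Complex.normSq ((∑ x : F, mDiffIter n k S x) * c^(2^n))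
        = Complex.normSq (∑ x : F, mDiffIter n k S x) * ρ^(2^(n+1)) := fun k => by
      rw [Complex.normSq_mul, hnormc]
    simp only [step1]
    rw [← Finset.sum_mul]
    calc (∑ k : Fin n → F, Complex.normSq (∑ x : F, mDiffIter n k S x)) * ρ^(2^(n+1))
        ≤ (∑ k : Fin n → F, (q:ℝ)^(2^n) * (∑ h : F, ∑ x : F, mDiffIter n k (Sh h) x).re)
            * ρ^(2^(n+1)) :=
          mul_le_mul_of_nonneg_right (Finset.sum_le_sum fun k _ => hkey k) (by positivity)
      _ = ρ^(2^n) * ∑ k : Fin n → F, (∑ h : F, ∑ x : F, mDiffIter n k (Sh h) x).re := by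
          rw [← Finset.mul_sum, ← hqρ]
          ring
      _ = ρ^(2^n) * ∑ h : F, (Th h).re := by
          congr 1
          simp only [Complex.re_sum]
          rw [Finset.sum_comm]
          refine Finset.sum_congr rfl fun h _ => ?_
          rw [hTh]
          simp only [Complex.re_sum]
      _ ≤ ρ^(2^n) * ∑ h : F, ‖Th h‖ :=
          mul_le_mul_of_nonneg_left (Finset.sum_le_sum fun h _ => Complex.re_le_norm _)
            (by positivity)
  -- rewrite the right-hand side
  simp only [hThc]
  have hRHSterm : ∀ h : F, ‖(Th h * c^(2^n)) / (q:ℂ)^(n+1)‖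
      = ‖Th h‖ * (ρ^(2^n) / (q:ℝ)^(n+1)) := by
    intro h
    rw [norm_div, norm_mul, norm_pow, habsc, norm_pow, Complex.norm_natCast, mul_div_assoc]
  rw [← hq]
  simp only [hRHSterm]
  rw [← Finset.sum_mul]
  have hA : ‖TS / (q:ℂ)^(n+1+1)‖ = ‖TS‖ / (q:ℝ)^(n+1+1) := by
    rw [norm_div, norm_pow, Complex.norm_natCast]
  have hA1 : ‖TS / (q:ℂ)^(n+1+1)‖ ≤ 1 := by
    rw [hA]
    exact div_le_one_of_le₀ hTSle (by positivity)
  calc ‖TS / (q:ℂ)^(n+1+1)‖ ^ 2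
      ≤ ‖TS / (q:ℂ)^(n+1+1)‖ ^ 1 :=
        pow_le_pow_of_le_one (norm_nonneg _) hA1 (by norm_num)
    _ = ‖TS‖ / (q:ℝ)^(n+1+1) := by rw [pow_one, hA]
    _ ≤ (ρ^(2^n) * ∑ h : F, ‖Th h‖) / (q:ℝ)^(n+1+1) := by
        gcongr
    _ = ((∑ h : F, ‖Th h‖) * (ρ^(2^n) / (q:ℝ)^(n+1))) / (q:ℝ) := by
        rw [pow_succ (q:ℝ) (n+1)]
        ring
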